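/- Let G be a finite cyclic group of order N, r | N with factorization data as follows: write N = Π p^{a_p}, r = Π p^{b_p}; let u be the radical of the part of N coprime to r, s the product of p^{b_p} over primes with a_p = b_p > 0, and p_1,...,p_k the primes with a_p > b_p > 0, with e_i = p_i^{b_{p_i}}, f_i = p_i^{b_{p_i}+1}. Then for every x ∈ G, x has order N/r if and only if x is u-free, x is an s-th power, and for each i, x is an e_i-th power but not an f_i-th power. -/
import Mathlib

-- key lemma: in a cyclic group of order N, for d ∣ N, x is a d-th power iff d ∣ N / orderOf x
lemma key_pow_iff {G : Type*} [CommGroup G] [Fintype G] [IsCyclic G]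
    {N d : ℕ} (hN : Fintype.card G = N) (hd : d ∣ N) (x : G) :
    (∃ y : G, y ^ d = x) ↔ d ∣ N / orderOf x := by
  obtain ⟨g, hg⟩ := IsCyclic.exists_monoid_generator (α := G)
  have hog : orderOf g = N := by
    rw [← hN, ← Nat.card_eq_fintype_card]
    apply orderOf_eq_card_of_forall_mem_zpowers
    intro z
    obtain ⟨k, hk⟩ := hg z
    exact ⟨k, by simpa using hk⟩
  obtain ⟨t, ht'⟩ := hg x
  have ht : g ^ t = x := ht'
  have hN0 : 0 < N := hN ▸ Fintype.card_pos
  have horder : N / orderOf x = Nat.gcd N t := by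
    rw [← ht, orderOf_pow, hog, Nat.div_div_self (Nat.gcd_dvd_left _ _) hN0.ne']
  rw [horder]
  constructor
  · rintro ⟨y, hy⟩
    obtain ⟨k, hk'⟩ := hg y
    have hk : g ^ k = y := hk'
    have : g ^ (k * d) = g ^ t := by rw [pow_mul, hk, hy, ht]
    have hmod : k * d ≡ t [MOD N] := by
      rw [← hog]; exact pow_eq_pow_iff_modEq.mp this
    have hz : (N : ℤ) ∣ (t : ℤ) - (k * d : ℕ) := hmod.dvd
    have hdt : (d : ℤ) ∣ (t : ℤ) := by
      have h1 : (d : ℤ) ∣ (t : ℤ) - (k * d : ℕ) := dvd_trans (Int.natCast_dvd_natCast.mpr hd) hz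
      have h2 : (d : ℤ) ∣ ((k * d : ℕ) : ℤ) := by push_cast; exact ⟨k, mul_comm _ _⟩
      simpa using dvd_add h1 h2
    exact Nat.dvd_gcd hd (Int.natCast_dvd_natCast.mp hdt)
  · intro hdvd
    have hdt : d ∣ t := hdvd.trans (Nat.gcd_dvd_right _ _)
    exact ⟨g ^ (t / d), by rw [← pow_mul, Nat.div_mul_cancel hdt, ht]⟩

lemma key_nt {N r m u s : ℕ} (hN0 : 0 < N) (hr : r ∣ N) (hm : m ∣ N)
    (hu : u = ∏ p ∈ N.primeFactors.filter (fun p => r.factorization p = 0), p)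
    (hs : s = ∏ p ∈ N.primeFactors.filter
        (fun p => N.factorization p = r.factorization p ∧ 0 < r.factorization p),
      p ^ r.factorization p) :
    m = r ↔ ((∀ d : ℕ, d ∣ u → d ∣ m → d = 1) ∧ s ∣ m ∧
      ∀ p ∈ N.primeFactors, r.factorization p < N.factorization p → 0 < r.factorization p →
        p ^ r.factorization p ∣ m ∧ ¬ p ^ (r.factorization p + 1) ∣ m) := by
  have hr0 : r ≠ 0 := by rintro rfl; exact hN0.ne' (Nat.eq_zero_of_zero_dvd hr)
  have hm0 : m ≠ 0 := by rintro rfl; exact hN0.ne' (Nat.eq_zero_of_zero_dvd hm)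
  constructor
  · rintro rfl
    refine ⟨?_, ?_, ?_⟩
    · have hur : Nat.Coprime u m := by
        rw [hu]
        apply Nat.Coprime.prod_left
        intro p hp
        rw [Finset.mem_filter] at hp
        have hpp : p.Prime := Nat.prime_of_mem_primeFactors hp.1
        rw [hpp.coprime_iff_not_dvd]
        intro hdvd
        have := (Nat.Prime.factorization_pos_of_dvd hpp hr0 hdvd)
        omega
      intro d hd1 hd2
      have := Nat.dvd_gcd hd1 hd2
      rw [Nat.Coprime] at hur
      rw [hur] at this
      exact Nat.dvd_one.mp this
    · rw [hs]
      have hrfact : ∏ p ∈ m.primeFactors, p ^ m.factorization p = m := by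
        rw [← Nat.support_factorization]
        exact Nat.factorization_prod_pow_eq_self hr0
      refine dvd_trans ?_ hrfact.dvd
      apply Finset.prod_dvd_prod_of_subset
      intro p hp
      rw [Finset.mem_filter] at hp
      have hpp : p.Prime := Nat.prime_of_mem_primeFactors hp.1
      exact Nat.mem_primeFactors.mpr ⟨hpp, Nat.dvd_of_factorization_pos hp.2.2.ne', hr0⟩
    · intro p hp _ _
      exact ⟨Nat.ordProj_dvd m p,
        Nat.pow_succ_factorization_not_dvd hr0 (Nat.prime_of_mem_primeFactors hp)⟩
  · rintro ⟨h1, h2, h3⟩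
    apply Nat.factorization_inj (Set.mem_setOf.mpr hm0) (Set.mem_setOf.mpr hr0)
    ext p
    by_cases hpp : p.Prime
    · by_cases hpN : p ∣ N
      · have hpmem : p ∈ N.primeFactors := Nat.mem_primeFactors.mpr ⟨hpp, hpN, hN0.ne'⟩
        have hle_r : r.factorization p ≤ N.factorization p :=
          (Nat.factorization_le_iff_dvd hr0 hN0.ne').mpr hr p
        have hle_m : m.factorization p ≤ N.factorization p :=
          (Nat.factorization_le_iff_dvd hm0 hN0.ne').mpr hm p
        rcases Nat.eq_zero_or_pos (r.factorization p) with hz | hpos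
        · rw [hz]
          have hpu : p ∣ u := hu ▸ Finset.dvd_prod_of_mem _ (Finset.mem_filter.mpr ⟨hpmem, hz⟩)
          apply Nat.factorization_eq_zero_of_not_dvd
          intro hpm
          exact hpp.ne_one (h1 p hpu hpm)
        · rcases eq_or_lt_of_le hle_r with heq | hlt
          · have hpmemf : p ∈ N.primeFactors.filter
                (fun p => N.factorization p = r.factorization p ∧ 0 < r.factorization p) :=
              Finset.mem_filter.mpr ⟨hpmem, heq.symm, hpos⟩
            have hps : p ^ r.factorization p ∣ s :=
              hs ▸ Finset.dvd_prod_of_mem (fun p => p ^ r.factorization p) hpmemf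
            have hge : r.factorization p ≤ m.factorization p :=
              (Nat.Prime.pow_dvd_iff_le_factorization hpp hm0).mp (hps.trans h2)
            omega
          · obtain ⟨h5, h6⟩ := h3 p hpmem hlt hpos
            have hge := (Nat.Prime.pow_dvd_iff_le_factorization hpp hm0).mp h5
            have hlt2 : ¬ (r.factorization p + 1 ≤ m.factorization p) :=
              fun h => h6 ((Nat.Prime.pow_dvd_iff_le_factorization hpp hm0).mpr h)
            omega
      · rw [Nat.factorization_eq_zero_of_not_dvd (fun h => hpN (h.trans hm)),
          Nat.factorization_eq_zero_of_not_dvd (fun h => hpN (h.trans hr))]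
    · simp [Nat.factorization_eq_zero_of_not_prime _ hpp]

theorem stmt_12 (G : Type*) [CommGroup G] [Fintype G] [IsCyclic G]
    (N r : ℕ) (hN : Fintype.card G = N) (hr : r ∣ N)
    (u s : ℕ)
    (hu : u = ∏ p ∈ N.primeFactors.filter (fun p => r.factorization p = 0), p)
    (hs : s = ∏ p ∈ N.primeFactors.filter
        (fun p => N.factorization p = r.factorization p ∧ 0 < r.factorization p),
      p ^ r.factorization p)
    (x : G) :
    orderOf x = N / r ↔
      ((∀ d : ℕ, d ∣ u → (∃ y : G, y ^ d = x) → d = 1) ∧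
        (∃ y : G, y ^ s = x) ∧
        (∀ p ∈ N.primeFactors,
          r.factorization p < N.factorization p → 0 < r.factorization p →
            (∃ y : G, y ^ (p ^ r.factorization p) = x) ∧
              ¬ ∃ y : G, y ^ (p ^ (r.factorization p + 1)) = x)) := by
  have hN0 : 0 < N := hN ▸ Fintype.card_pos
  have hr0 : r ≠ 0 := by rintro rfl; exact hN0.ne' (Nat.eq_zero_of_zero_dvd hr)
  have hn : orderOf x ∣ N := hN ▸ orderOf_dvd_card
  set m := N / orderOf x with hm_def
  have hm : m ∣ N := Nat.div_dvd_of_dvd hn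
  have huN : u ∣ N := by
    rw [hu]
    exact (Finset.prod_dvd_prod_of_subset _ _ _ (Finset.filter_subset _ _)).trans
      (Nat.prod_primeFactors_dvd N)
  have hNfact : ∏ p ∈ N.primeFactors, p ^ N.factorization p = N := by
    rw [← Nat.support_factorization]
    exact Nat.factorization_prod_pow_eq_self hN0.ne'
  have hsN : s ∣ N := by
    rw [hs]
    refine dvd_trans ?_ hNfact.dvd
    have heq : ∏ p ∈ N.primeFactors.filter
        (fun p => N.factorization p = r.factorization p ∧ 0 < r.factorization p),
        p ^ r.factorization p = ∏ p ∈ N.primeFactors.filter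
        (fun p => N.factorization p = r.factorization p ∧ 0 < r.factorization p),
        p ^ N.factorization p :=
      Finset.prod_congr rfl (fun p hp => by rw [(Finset.mem_filter.mp hp).2.1])
    rw [heq]
    exact Finset.prod_dvd_prod_of_subset _ _ _ (Finset.filter_subset _ _)
  have hL : orderOf x = N / r ↔ m = r := by
    constructor
    · intro h; rw [hm_def, h, Nat.div_div_self hr hN0.ne']
    · intro h; rw [← h, hm_def, Nat.div_div_self hn hN0.ne']
  rw [hL, key_nt hN0 hr hm hu hs]
  refine and_congr ?_ (and_congr ?_ ?_)
  · constructor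
    · intro h d hdu hex
      exact h d hdu ((key_pow_iff hN (hdu.trans huN) x).mp hex)
    · intro h d hdu hdm
      exact h d hdu ((key_pow_iff hN (hdu.trans huN) x).mpr hdm)
  · exact (key_pow_iff hN hsN x).symm
  · refine forall₂_congr fun p hp => ?_
    refine imp_congr_right fun hlt => imp_congr_right fun hpos => ?_
    have hpp : p.Prime := Nat.prime_of_mem_primeFactors hp
    have h1N : p ^ r.factorization p ∣ N :=
      (pow_dvd_pow p hlt.le).trans (Nat.ordProj_dvd N p)
    have h2N : p ^ (r.factorization p + 1) ∣ N :=
      (pow_dvd_pow p hlt).trans (Nat.ordProj_dvd N p)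
    exact and_congr (key_pow_iff hN h1N x).symm (not_congr (key_pow_iff hN h2N x).symm)
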